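/- Let 1 < p < ∞ and let λ ∈ ℂ satisfy |λ − q/2| < q/2, where 1/p + 1/q = 1 (equivalently Re(1/λ) > 1/q). Then the function f_λ(x) = x^{1/λ − 1} belongs to L^p_{loc}([0,∞)) (its p-th power is integrable over each interval [0,j]) and satisfies C f_λ = λ f_λ, where Cf(x) = (1/x)∫₀ˣ f(t)dt. -/

import Mathlib

open MeasureTheory

/-- The Cesàro average: `ces f x = (1/x) ∫₀ˣ f(t) dt` for `x ≠ 0`, `ces f 0 = f 0`. -/
noncomputable def ces (f : ℝ → ℂ) (x : ℝ) : ℂ :=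
  if x = 0 then f 0 else (∫ t in (0:ℝ)..x, f t) / (x : ℂ)

/-- For `1 < p < ∞` and `|λ - q/2| < q/2` (with `1/p + 1/q = 1`), the function
`f_λ(x) = x^(1/λ - 1)` lies in `L^p_loc([0,∞))` (its `p`-th power is integrable on each
`[0,j]`) and is an eigenfunction: `C f_λ = λ f_λ`. -/
theorem cesaro_Lploc_eigenfunction (p q : ℝ) (hp : 1 < p) (hq : 1/p + 1/q = 1)
    (l : ℂ) (hl : ‖l - (q/2 : ℝ)‖ < q/2) :
    (∀ j : ℕ, MemLp (fun x : ℝ => (x : ℂ) ^ (1/l - 1)) (ENNReal.ofReal p)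
      (volume.restrict (Set.Ioc (0:ℝ) (j : ℝ)))) ∧
    ∀ x ∈ Set.Ioi (0:ℝ),
      ces (fun t : ℝ => (t : ℂ) ^ (1/l - 1)) x = l * (x : ℂ) ^ (1/l - 1) := by
  have hp0 : (0:ℝ) < p := lt_trans one_pos hp
  have hq1 : 1/q = 1 - 1/p := by linarith
  have hqpos : (0:ℝ) < 1/q := by
    rw [hq1]
    have : 1/p < 1 := by
      rw [div_lt_one hp0]; exact hp
    linarith
  have hqpos' : (0:ℝ) < q := by
    by_contra h
    push_neg at h
    have : 1/q ≤ 0 := one_div_nonpos.mpr h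
    linarith
  -- normSq l < q * l.re
  have hkey : Complex.normSq l < q * l.re := by
    have h2 : ‖l - (q/2 : ℝ)‖^2 < (q/2)^2 := by
      have h0 : (0:ℝ) ≤ ‖l - (q/2 : ℝ)‖ := norm_nonneg _
      nlinarith
    rw [Complex.sq_norm] at h2
    have : Complex.normSq (l - (q/2:ℝ)) = (l.re - q/2)^2 + l.im^2 := by
      simp [Complex.normSq_apply, Complex.sub_re, Complex.sub_im]; ring
    rw [this] at h2
    have : Complex.normSq l = l.re^2 + l.im^2 := by simp [Complex.normSq_apply]; ring
    nlinarith
  have hl0 : l ≠ 0 := by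
    intro h
    rw [h] at hkey
    simp at hkey
  have hns : 0 < Complex.normSq l := Complex.normSq_pos.mpr hl0
  have hre : 1/q < (1/l).re := by
    rw [one_div l, Complex.inv_re]
    rw [div_lt_div_iff₀ hqpos' hns]
    nlinarith
  set c : ℂ := 1/l - 1 with hc
  have hcre : -1/p < c.re := by
    have : c.re = (1/l).re - 1 := by simp [hc, Complex.sub_re]
    rw [this]
    have hnd : (-1:ℝ)/p = -(1/p) := by ring
    linarith
  have hcre1 : -1 < c.re := by
    have : (-1:ℝ) < -1/p := by
      rw [neg_div, neg_lt_neg_iff, div_lt_one hp0]; exact hp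
    linarith
  have hil0 : (1:ℂ)/l ≠ 0 := one_div_ne_zero hl0
  have hc1 : c + 1 = 1/l := by ring
  -- measurability
  have hmeas : Measurable fun x : ℝ => (x:ℂ) ^ c := by
    have heq : ∀ x : ℝ, (x:ℂ) ^ c =
        if x = 0 then (if c = 0 then 1 else 0) else Complex.exp (Complex.log x * c) := by
      intro x
      rw [Complex.cpow_def]
      simp [Complex.ofReal_eq_zero]
    simp only [heq]
    exact Measurable.ite (measurableSet_eq) measurable_const
      ((Complex.measurable_ofReal.clog.mul measurable_const).cexp)
  constructor
  · intro j
    set μ := volume.restrict (Set.Ioc (0:ℝ) (j:ℝ)) with hμ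
    have hP0 : (ENNReal.ofReal p) ≠ 0 := by
      simp [ENNReal.ofReal_eq_zero]; linarith
    have hPtop : (ENNReal.ofReal p) ≠ ⊤ := ENNReal.ofReal_ne_top
    have hPto : (ENNReal.ofReal p).toReal = p := ENNReal.toReal_ofReal hp0.le
    have hasm : AEStronglyMeasurable (fun x : ℝ => (x:ℂ) ^ c) μ :=
      hmeas.aestronglyMeasurable
    have hiff : MemLp (fun x : ℝ => (x:ℂ) ^ c) (ENNReal.ofReal p) μ ↔
        Integrable (fun x : ℝ => ‖(x:ℂ) ^ c‖ ^ (ENNReal.ofReal p).toReal) μ := by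
      rw [← memLp_one_iff_integrable]
      convert (memLp_norm_rpow_iff hasm hP0 hPtop).symm
      · rfl
      rw [ENNReal.div_self hP0 hPtop]
    rw [hiff]
    -- compare with x ^ (c.re * p)
    have hint : IntegrableOn (fun x : ℝ => x ^ (c.re * p)) (Set.Ioc (0:ℝ) (j:ℝ)) volume := by
      have h1 : (-1:ℝ) < c.re * p := by
        have := mul_lt_mul_of_pos_right hcre hp0
        rw [div_mul_eq_mul_div, neg_one_mul, neg_div, div_self hp0.ne'] at this
        linarith
      have := intervalIntegral.intervalIntegrable_rpow' (a := 0) (b := (j:ℝ)) h1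
      rwa [intervalIntegrable_iff_integrableOn_Ioc_of_le (by positivity)] at this
    apply hint.congr
    filter_upwards [ae_restrict_mem measurableSet_Ioc] with x hx
    rw [hPto, Complex.norm_cpow_eq_rpow_re_of_pos hx.1,
      ← Real.rpow_mul hx.1.le]
  · intro x hx
    simp only [Set.mem_Ioi] at hx
    have hx0 : x ≠ 0 := hx.ne'
    have hxc0 : (x:ℂ) ≠ 0 := by exact_mod_cast hx0
    rw [ces, if_neg hx0]
    rw [integral_cpow (Or.inl hcre1)]
    rw [hc1]
    rw [Complex.ofReal_zero, Complex.zero_cpow hil0, sub_zero]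
    have hxpow : (x:ℂ) ^ (1/l : ℂ) = (x:ℂ) ^ c * x := by
      rw [← hc1, Complex.cpow_add _ _ hxc0, Complex.cpow_one]
    rw [hxpow]
    field_simp
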